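/- Let A, B ⊆ ℝ² be finite nonempty sets such that p₁ < q₁ for every p ∈ A and q ∈ B, such that all points of A ∪ B have pairwise distinct x-coordinates, and such that no three distinct points of A ∪ B are collinear. Let (a, b) ∈ A × B be the bridge of (A, B). Then a point p ∈ ℝ² is an upper-hull vertex of A ∪ B if and only if either p is an upper-hull vertex of A with p₁ ≤ a₁, or p is an upper-hull vertex of B with b₁ ≤ p₁. (The upper-hull vertices of A that survive in the union form a contiguous prefix ending at the bridge endpoint a, and those of B form a contiguous suffix starting at b.) -/

import Mathlib

open Pointwise

/-- The downward vertical cone in the plane. -/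
def downCone : Set (ℝ × ℝ) := {d : ℝ × ℝ | d.1 = 0 ∧ d.2 ≤ 0}

/-- `p` is an upper-hull vertex of a finite set `S`: it belongs to `S` and does not
lie on or below the upper hull of the remaining points. -/
def IsUpperHullVertex (S : Set (ℝ × ℝ)) (p : ℝ × ℝ) : Prop :=
  p ∈ S ∧ p ∉ convexHull ℝ (S \ {p}) + downCone

/-- `(a, b) ∈ A × B` is a bridge of `(A, B)`: every point of `A ∪ B` lies on or
below the line through `a` and `b`. -/
def IsBridge (A B : Set (ℝ × ℝ)) (a b : ℝ × ℝ) : Prop :=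
  a ∈ A ∧ b ∈ B ∧
    ∀ p ∈ A ∪ B, (p.2 - a.2) * (b.1 - a.1) ≤ (b.2 - a.2) * (p.1 - a.1)



lemma mem_hull_add_downCone {X : Set (ℝ × ℝ)} {p : ℝ × ℝ} :
    p ∈ convexHull ℝ X + downCone ↔ ∃ q ∈ convexHull ℝ X, q.1 = p.1 ∧ p.2 ≤ q.2 := by
  constructor
  · rintro ⟨q, hq, d, ⟨hd1, hd2⟩, rfl⟩
    exact ⟨q, hq, by simp [hd1], by simp; linarith⟩
  · rintro ⟨q, hq, h1, h2⟩
    refine ⟨q, hq, (0, p.2 - q.2), ⟨rfl, (by linarith : p.2 - q.2 ≤ 0)⟩, ?_⟩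
    have : q + ((0 : ℝ), p.2 - q.2) = p := by
      rw [Prod.ext_iff]; constructor <;> simp [h1]
    exact this

lemma linFab (β δ : ℝ) : IsLinearMap ℝ (fun x : ℝ × ℝ => β * x.1 - δ * x.2) := by
  constructor
  · intro x y; simp; ring
  · intro c x; simp [Prod.smul_fst, Prod.smul_snd, smul_eq_mul]; ring

lemma linFst : IsLinearMap ℝ (fun x : ℝ × ℝ => x.1) :=
  ⟨fun _ _ => rfl, fun _ _ => rfl⟩

lemma hull_f_ge {S : Set (ℝ × ℝ)} {β δ c : ℝ} (h : ∀ x ∈ S, c ≤ β * x.1 - δ * x.2) :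
    ∀ q ∈ convexHull ℝ S, c ≤ β * q.1 - δ * q.2 :=
  fun _ hq => convexHull_min h (convex_halfSpace_ge (linFab β δ) c) hq

lemma eq_of_min {S : Set (ℝ × ℝ)} (hS : S.Finite) {β δ c : ℝ} {e q : ℝ × ℝ}
    (hge : ∀ x ∈ S, c ≤ β * x.1 - δ * x.2)
    (hgt : ∀ x ∈ S, x ≠ e → c < β * x.1 - δ * x.2)
    (hq : q ∈ convexHull ℝ S) (hqc : β * q.1 - δ * q.2 ≤ c) : q = e := by
  rw [hS.convexHull_eq] at hq
  obtain ⟨w, hw0, hw1, hwq⟩ := hq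
  rw [Finset.centerMass_eq_of_sum_1 _ _ hw1] at hwq
  simp only [id] at hwq
  have hq1 : q.1 = ∑ y ∈ hS.toFinset, w y * y.1 := by
    rw [← hwq, Prod.fst_sum]
    exact Finset.sum_congr rfl fun y _ => rfl
  have hq2 : q.2 = ∑ y ∈ hS.toFinset, w y * y.2 := by
    rw [← hwq, Prod.snd_sum]
    exact Finset.sum_congr rfl fun y _ => rfl
  have hexp : ∑ y ∈ hS.toFinset, w y * ((β * y.1 - δ * y.2) - c)
      = β * (∑ y ∈ hS.toFinset, w y * y.1) - δ * (∑ y ∈ hS.toFinset, w y * y.2)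
        - c * (∑ y ∈ hS.toFinset, w y) := by
    rw [Finset.mul_sum, Finset.mul_sum, Finset.mul_sum,
      ← Finset.sum_sub_distrib, ← Finset.sum_sub_distrib]
    exact Finset.sum_congr rfl fun y _ => by ring
  have hnn : ∀ y ∈ hS.toFinset, 0 ≤ w y * ((β * y.1 - δ * y.2) - c) := fun y hy =>
    mul_nonneg (hw0 y (hS.mem_toFinset.1 hy))
      (sub_nonneg.2 (hge y (hS.mem_toFinset.1 hy)))
  have hzero : ∑ y ∈ hS.toFinset, w y * ((β * y.1 - δ * y.2) - c) = 0 :=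
    le_antisymm (by rw [hexp, ← hq1, ← hq2, hw1]; linarith) (Finset.sum_nonneg hnn)
  have hterm := (Finset.sum_eq_zero_iff_of_nonneg hnn).1 hzero
  have hwy : ∀ y ∈ hS.toFinset, w y • y = w y • e := by
    intro y hy
    by_cases hye : y = e
    · rw [hye]
    · rcases mul_eq_zero.1 (hterm y hy) with h | h
      · rw [h, zero_smul, zero_smul]
      · exact absurd h (ne_of_gt (sub_pos.2 (hgt y (hS.mem_toFinset.1 hy) hye)))
  calc q = ∑ y ∈ hS.toFinset, w y • y := hwq.symm
    _ = ∑ y ∈ hS.toFinset, w y • e := Finset.sum_congr rfl hwy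
    _ = (∑ y ∈ hS.toFinset, w y) • e := (Finset.sum_smul).symm
    _ = e := by rw [hw1, one_smul]

lemma chopLeft {S : Set (ℝ × ℝ)} {a b : ℝ × ℝ} (hd : a.1 < b.1)
    (hbel : ∀ x ∈ S, (b.2 - a.2) * a.1 - (b.1 - a.1) * a.2
      ≤ (b.2 - a.2) * x.1 - (b.1 - a.1) * x.2)
    {q : ℝ × ℝ} (hq : q ∈ convexHull ℝ S) (hql : q.1 ≤ a.1) :
    ∃ r ∈ convexHull ℝ ({x ∈ S | x.1 ≤ a.1} ∪ {a}), r.1 = q.1 ∧ q.2 ≤ r.2 := by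
  classical
  set L : Set (ℝ × ℝ) := {x ∈ S | x.1 ≤ a.1} with hLdef
  set R : Set (ℝ × ℝ) := {x ∈ S | a.1 < x.1} with hRdef
  have hSLR : S = L ∪ R := by
    ext x; constructor
    · intro hxS
      rcases le_or_gt x.1 a.1 with h | h
      · exact Or.inl ⟨hxS, h⟩
      · exact Or.inr ⟨hxS, h⟩
    · rintro (h | h) <;> exact h.1
  by_cases hR : R.Nonempty
  swap
  · have hSL : S = L := by
      rw [hSLR, Set.not_nonempty_iff_eq_empty.1 hR, Set.union_empty]
    exact ⟨q, convexHull_mono Set.subset_union_left (hSL ▸ hq), rfl, le_refl _⟩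
  by_cases hL : L.Nonempty
  swap
  · exfalso
    have hq' : q ∈ convexHull ℝ R := by
      rw [hSLR, Set.not_nonempty_iff_eq_empty.1 hL, Set.empty_union] at hq
      exact hq
    have : a.1 < q.1 :=
      convexHull_min (fun x hx => hx.2) (convex_halfSpace_gt linFst a.1) hq'
    linarith
  rw [hSLR, convexHull_union hL hR, mem_convexJoin] at hq
  obtain ⟨qL, hqL, qR, hqR, hseg⟩ := hq
  obtain ⟨u, s, hu0, hs0, hus, rfl⟩ := hseg
  have hdpos : (0:ℝ) < b.1 - a.1 := by linarith
  have hqL1 : qL.1 ≤ a.1 :=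
    convexHull_min (fun x hx => hx.2) (convex_halfSpace_le linFst a.1) hqL
  have hqR1 : a.1 < qR.1 :=
    convexHull_min (fun x hx => hx.2) (convex_halfSpace_gt linFst a.1) hqR
  have hfL : (b.2 - a.2) * a.1 - (b.1 - a.1) * a.2
      ≤ (b.2 - a.2) * qL.1 - (b.1 - a.1) * qL.2 :=
    hull_f_ge (fun x hx => hbel x hx.1) qL hqL
  have hfR : (b.2 - a.2) * a.1 - (b.1 - a.1) * a.2
      ≤ (b.2 - a.2) * qR.1 - (b.1 - a.1) * qR.2 :=
    hull_f_ge (fun x hx => hbel x hx.1) qR hqR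
  have h1 : (u • qL + s • qR).1 = u * qL.1 + s * qR.1 := by
    simp [Prod.fst_add, Prod.smul_fst, smul_eq_mul]
  have h2 : (u • qL + s • qR).2 = u * qL.2 + s * qR.2 := by
    simp [Prod.snd_add, Prod.smul_snd, smul_eq_mul]
  by_cases hs' : s = 0
  · subst hs'
    have hu1 : u = 1 := by linarith
    subst hu1
    refine ⟨qL, convexHull_mono Set.subset_union_left hqL, ?_, ?_⟩
    · rw [h1]; ring
    · rw [h2]; simp
  have hspos : 0 < s := hs0.lt_of_ne (Ne.symm hs')
  rw [h1] at hql
  have hqLlt : qL.1 < a.1 := by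
    rcases lt_or_eq_of_le hqL1 with h | h
    · exact h
    · exfalso
      rw [h] at hql
      have h3 : (u + s) * a.1 = 1 * a.1 := by rw [hus]
      nlinarith [mul_pos hspos (sub_pos.2 hqR1)]
  have hq1s : (u * qL.1 + s * qR.1) - qL.1 = s * (qR.1 - qL.1) := by
    linear_combination qL.1 * hus
  have hden : (0:ℝ) < a.1 - qL.1 := by linarith
  have hq1ge : qL.1 ≤ u * qL.1 + s * qR.1 := by
    nlinarith [mul_nonneg hs0 (sub_nonneg.2 (le_of_lt (lt_trans hqLlt hqR1)))]
  obtain ⟨t, ht0, ht1, htu⟩ : ∃ t : ℝ, 0 ≤ t ∧ t ≤ 1 ∧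
      t * (a.1 - qL.1) = (u * qL.1 + s * qR.1) - qL.1 :=
    ⟨((u * qL.1 + s * qR.1) - qL.1) / (a.1 - qL.1),
      div_nonneg (by linarith) hden.le,
      (div_le_one hden).2 (by linarith),
      div_mul_cancel₀ _ hden.ne'⟩
  have hteq : t * (a.1 - qL.1) = s * (qR.1 - qL.1) := by rw [htu, hq1s]
  have hts : s ≤ t := by
    nlinarith [mul_nonneg hs0 (sub_nonneg.2 hqR1.le)]
  refine ⟨(1 - t) • qL + t • a, ?_, ?_, ?_⟩
  · apply (convex_convexHull ℝ ({x ∈ S | x.1 ≤ a.1} ∪ {a})).segment_subset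
      (convexHull_mono Set.subset_union_left hqL)
      (subset_convexHull ℝ _ (Or.inr rfl))
    exact ⟨1 - t, t, by linarith, ht0, by ring, rfl⟩
  · rw [h1]
    have : ((1 - t) • qL + t • a).1 = (1 - t) * qL.1 + t * a.1 := by
      simp [Prod.fst_add, Prod.smul_fst, smul_eq_mul]
    rw [this]; linear_combination htu
  · rw [h2]
    have hr2 : ((1 - t) • qL + t • a).2 = (1 - t) * qL.2 + t * a.2 := by
      simp [Prod.snd_add, Prod.smul_snd, smul_eq_mul]
    rw [hr2]
    have e1 : 0 ≤ (t - s) * (((b.2 - a.2) * qL.1 - (b.1 - a.1) * qL.2)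
        - ((b.2 - a.2) * a.1 - (b.1 - a.1) * a.2)) :=
      mul_nonneg (sub_nonneg.2 hts) (sub_nonneg.2 hfL)
    have e2 : 0 ≤ s * (((b.2 - a.2) * qR.1 - (b.1 - a.1) * qR.2)
        - ((b.2 - a.2) * a.1 - (b.1 - a.1) * a.2)) :=
      mul_nonneg hs0 (sub_nonneg.2 hfR)
    have identity : (b.1 - a.1) * (t * (a.2 - qL.2)) - (b.1 - a.1) * (s * (qR.2 - qL.2))
        = (t - s) * (((b.2 - a.2) * qL.1 - (b.1 - a.1) * qL.2)
            - ((b.2 - a.2) * a.1 - (b.1 - a.1) * a.2))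
          + s * (((b.2 - a.2) * qR.1 - (b.1 - a.1) * qR.2)
            - ((b.2 - a.2) * a.1 - (b.1 - a.1) * a.2)) := by
      linear_combination (b.2 - a.2) * hteq
    have hkey : (b.1 - a.1) * (s * (qR.2 - qL.2)) ≤ (b.1 - a.1) * (t * (a.2 - qL.2)) := by
      linarith only [identity, e1, e2]
    have hkey2 : s * (qR.2 - qL.2) ≤ t * (a.2 - qL.2) :=
      le_of_mul_le_mul_left hkey hdpos
    have hu1 : u = 1 - s := by linarith
    rw [hu1]; linarith only [hkey2]

lemma chopRight {S : Set (ℝ × ℝ)} {a b : ℝ × ℝ} (hd : a.1 < b.1)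
    (hbel : ∀ x ∈ S, (b.2 - a.2) * a.1 - (b.1 - a.1) * a.2
      ≤ (b.2 - a.2) * x.1 - (b.1 - a.1) * x.2)
    {q : ℝ × ℝ} (hq : q ∈ convexHull ℝ S) (hqr : b.1 ≤ q.1) :
    ∃ r ∈ convexHull ℝ ({x ∈ S | b.1 ≤ x.1} ∪ {b}), r.1 = q.1 ∧ q.2 ≤ r.2 := by
  classical
  set L : Set (ℝ × ℝ) := {x ∈ S | x.1 < b.1} with hLdef
  set R : Set (ℝ × ℝ) := {x ∈ S | b.1 ≤ x.1} with hRdef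
  have hSLR : S = L ∪ R := by
    ext x; constructor
    · intro hxS
      rcases lt_or_ge x.1 b.1 with h | h
      · exact Or.inl ⟨hxS, h⟩
      · exact Or.inr ⟨hxS, h⟩
    · rintro (h | h) <;> exact h.1
  by_cases hL : L.Nonempty
  swap
  · have hSR : S = R := by
      rw [hSLR, Set.not_nonempty_iff_eq_empty.1 hL, Set.empty_union]
    exact ⟨q, convexHull_mono Set.subset_union_left (hSR ▸ hq), rfl, le_refl _⟩
  by_cases hR : R.Nonempty
  swap
  · exfalso
    have hq' : q ∈ convexHull ℝ L := by
      rw [hSLR, Set.not_nonempty_iff_eq_empty.1 hR, Set.union_empty] at hq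
      exact hq
    have : q.1 < b.1 :=
      convexHull_min (fun x hx => hx.2) (convex_halfSpace_lt linFst b.1) hq'
    linarith
  rw [hSLR, convexHull_union hL hR, mem_convexJoin] at hq
  obtain ⟨qL, hqL, qR, hqR, hseg⟩ := hq
  obtain ⟨u, s, hu0, hs0, hus, rfl⟩ := hseg
  have hdpos : (0:ℝ) < b.1 - a.1 := by linarith
  have hqL1 : qL.1 < b.1 :=
    convexHull_min (fun x hx => hx.2) (convex_halfSpace_lt linFst b.1) hqL
  have hqR1 : b.1 ≤ qR.1 :=
    convexHull_min (fun x hx => hx.2) (convex_halfSpace_ge linFst b.1) hqR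
  have hfL : (b.2 - a.2) * a.1 - (b.1 - a.1) * a.2
      ≤ (b.2 - a.2) * qL.1 - (b.1 - a.1) * qL.2 :=
    hull_f_ge (fun x hx => hbel x hx.1) qL hqL
  have hfR : (b.2 - a.2) * a.1 - (b.1 - a.1) * a.2
      ≤ (b.2 - a.2) * qR.1 - (b.1 - a.1) * qR.2 :=
    hull_f_ge (fun x hx => hbel x hx.1) qR hqR
  have h1 : (u • qL + s • qR).1 = u * qL.1 + s * qR.1 := by
    simp [Prod.fst_add, Prod.smul_fst, smul_eq_mul]
  have h2 : (u • qL + s • qR).2 = u * qL.2 + s * qR.2 := by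
    simp [Prod.snd_add, Prod.smul_snd, smul_eq_mul]
  by_cases hu' : u = 0
  · subst hu'
    have hs1 : s = 1 := by linarith
    subst hs1
    refine ⟨qR, convexHull_mono Set.subset_union_left hqR, ?_, ?_⟩
    · rw [h1]; ring
    · rw [h2]; simp
  have hupos : 0 < u := hu0.lt_of_ne (Ne.symm hu')
  rw [h1] at hqr
  have hqRgt : b.1 < qR.1 := by
    rcases lt_or_eq_of_le hqR1 with h | h
    · exact h
    · exfalso
      rw [← h] at hqr
      have h3 : (u + s) * qR.1 = 1 * qR.1 := by rw [hus]
      nlinarith [mul_pos hupos (sub_pos.2 (lt_of_lt_of_le hqL1 hqR1))]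
  have hq1s : qR.1 - (u * qL.1 + s * qR.1) = u * (qR.1 - qL.1) := by
    linear_combination (-qR.1) * hus
  have hden : (0:ℝ) < qR.1 - b.1 := by linarith
  have hq1le : u * qL.1 + s * qR.1 ≤ qR.1 := by
    nlinarith [mul_nonneg hu0 (sub_nonneg.2 (le_of_lt (lt_of_lt_of_le hqL1 hqR1)))]
  obtain ⟨t, ht0, ht1, htu⟩ : ∃ t : ℝ, 0 ≤ t ∧ t ≤ 1 ∧
      t * (qR.1 - b.1) = qR.1 - (u * qL.1 + s * qR.1) :=
    ⟨(qR.1 - (u * qL.1 + s * qR.1)) / (qR.1 - b.1),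
      div_nonneg (by linarith) hden.le,
      (div_le_one hden).2 (by linarith),
      div_mul_cancel₀ _ hden.ne'⟩
  have hteq : t * (qR.1 - b.1) = u * (qR.1 - qL.1) := by rw [htu, hq1s]
  have hts : u ≤ t := by
    nlinarith [mul_nonneg hu0 (sub_nonneg.2 hqL1.le)]
  refine ⟨(1 - t) • qR + t • b, ?_, ?_, ?_⟩
  · apply (convex_convexHull ℝ ({x ∈ S | b.1 ≤ x.1} ∪ {b})).segment_subset
      (convexHull_mono Set.subset_union_left hqR)
      (subset_convexHull ℝ _ (Or.inr rfl))
    exact ⟨1 - t, t, by linarith, ht0, by ring, rfl⟩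
  · rw [h1]
    have : ((1 - t) • qR + t • b).1 = (1 - t) * qR.1 + t * b.1 := by
      simp [Prod.fst_add, Prod.smul_fst, smul_eq_mul]
    rw [this]; linear_combination -htu
  · rw [h2]
    have hr2 : ((1 - t) • qR + t • b).2 = (1 - t) * qR.2 + t * b.2 := by
      simp [Prod.snd_add, Prod.smul_snd, smul_eq_mul]
    rw [hr2]
    have e1 : 0 ≤ (t - u) * (((b.2 - a.2) * qR.1 - (b.1 - a.1) * qR.2)
        - ((b.2 - a.2) * a.1 - (b.1 - a.1) * a.2)) :=
      mul_nonneg (sub_nonneg.2 hts) (sub_nonneg.2 hfR)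
    have e2 : 0 ≤ u * (((b.2 - a.2) * qL.1 - (b.1 - a.1) * qL.2)
        - ((b.2 - a.2) * a.1 - (b.1 - a.1) * a.2)) :=
      mul_nonneg hu0 (sub_nonneg.2 hfL)
    have identity : (b.1 - a.1) * (t * (b.2 - qR.2)) - (b.1 - a.1) * (u * (qL.2 - qR.2))
        = (t - u) * (((b.2 - a.2) * qR.1 - (b.1 - a.1) * qR.2)
            - ((b.2 - a.2) * a.1 - (b.1 - a.1) * a.2))
          + u * (((b.2 - a.2) * qL.1 - (b.1 - a.1) * qL.2)
            - ((b.2 - a.2) * a.1 - (b.1 - a.1) * a.2)) := by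
      linear_combination (-(b.2 - a.2)) * hteq
    have hkey : (b.1 - a.1) * (u * (qL.2 - qR.2)) ≤ (b.1 - a.1) * (t * (b.2 - qR.2)) := by
      linarith only [identity, e1, e2]
    have hkey2 : u * (qL.2 - qR.2) ≤ t * (b.2 - qR.2) :=
      le_of_mul_le_mul_left hkey hdpos
    have hs1 : s = 1 - u := by linarith
    rw [hs1]; linarith only [hkey2]

/-- The upper-hull vertices of `A ∪ B` are exactly the upper-hull vertices of `A`
up to the bridge endpoint `a` together with the upper-hull vertices of `B` from the
bridge endpoint `b` on. -/
theorem upperHullVertex_union_iff (A B : Set (ℝ × ℝ))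
    (hA : A.Finite) (hB : B.Finite) (hAne : A.Nonempty) (hBne : B.Nonempty)
    (hsep : ∀ p ∈ A, ∀ q ∈ B, p.1 < q.1)
    (hx : ∀ p ∈ A ∪ B, ∀ q ∈ A ∪ B, p.1 = q.1 → p = q)
    (hcol : ∀ p ∈ A ∪ B, ∀ q ∈ A ∪ B, ∀ r ∈ A ∪ B,
      p ≠ q → q ≠ r → p ≠ r → ¬ Collinear ℝ ({p, q, r} : Set (ℝ × ℝ)))
    {a b : ℝ × ℝ} (hab : IsBridge A B a b) :
    ∀ p : ℝ × ℝ, IsUpperHullVertex (A ∪ B) p ↔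
      (IsUpperHullVertex A p ∧ p.1 ≤ a.1) ∨ (IsUpperHullVertex B p ∧ b.1 ≤ p.1) := by
  classical
  obtain ⟨haA, hbB, hbr⟩ := hab
  have hd : a.1 < b.1 := hsep a haA b hbB
  have hdpos : (0:ℝ) < b.1 - a.1 := by linarith
  have hbel : ∀ p ∈ A ∪ B, (b.2 - a.2) * a.1 - (b.1 - a.1) * a.2
      ≤ (b.2 - a.2) * p.1 - (b.1 - a.1) * p.2 := by
    intro p hp
    have := hbr p hp
    nlinarith [this]
  have hstrict : ∀ p ∈ A ∪ B, p ≠ a → p ≠ b →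
      (b.2 - a.2) * a.1 - (b.1 - a.1) * a.2
        < (b.2 - a.2) * p.1 - (b.1 - a.1) * p.2 := by
    intro p hp hpa hpb
    rcases lt_or_eq_of_le (hbel p hp) with h | h
    · exact h
    exfalso
    refine hcol p hp a (Or.inl haA) b (Or.inr hbB) hpa
      (fun hab' => absurd hd (by rw [hab']; exact lt_irrefl _))
      hpb ?_
    rw [collinear_iff_exists_forall_eq_smul_vadd]
    refine ⟨a, b - a, ?_⟩
    intro x hxm
    simp only [Set.mem_insert_iff, Set.mem_singleton_iff] at hxm
    rcases hxm with rfl | rfl | rfl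
    · refine ⟨(x.1 - a.1) / (b.1 - a.1), ?_⟩
      have hne : b.1 - a.1 ≠ 0 := hdpos.ne'
      rw [Prod.ext_iff]
      constructor
      · show x.1 = ((x.1 - a.1) / (b.1 - a.1)) • (b - a).1 + a.1
        rw [Prod.fst_sub, smul_eq_mul]
        field_simp
        ring
      · show x.2 = ((x.1 - a.1) / (b.1 - a.1)) • (b - a).2 + a.2
        rw [Prod.snd_sub, smul_eq_mul]
        field_simp
        linear_combination h
    · exact ⟨0, by simp⟩
    · exact ⟨1, by simp⟩
  -- points strictly between a and b are not upper hull vertices of the union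
  have hmid : ∀ p ∈ A ∪ B, a.1 < p.1 → p.1 < b.1 →
      p ∈ convexHull ℝ ((A ∪ B) \ {p}) + downCone := by
    intro p hp h1 h2
    rw [mem_hull_add_downCone]
    obtain ⟨t, ht0, ht1, htu⟩ : ∃ t : ℝ, 0 ≤ t ∧ t ≤ 1 ∧ t * (b.1 - a.1) = p.1 - a.1 :=
      ⟨(p.1 - a.1) / (b.1 - a.1), div_nonneg (by linarith) hdpos.le,
        (div_le_one hdpos).2 (by linarith), div_mul_cancel₀ _ hdpos.ne'⟩
    refine ⟨(1 - t) • a + t • b, ?_, ?_, ?_⟩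
    · apply (convex_convexHull ℝ ((A ∪ B) \ {p})).segment_subset
        (subset_convexHull ℝ _ ⟨Or.inl haA, fun hh => (by rw [Set.mem_singleton_iff.1 hh] at h1; linarith : False)⟩)
        (subset_convexHull ℝ _ ⟨Or.inr hbB, fun hh => (by rw [Set.mem_singleton_iff.1 hh] at h2; linarith : False)⟩)
      exact ⟨1 - t, t, by linarith, ht0, by ring, rfl⟩
    · have hc : ((1 - t) • a + t • b).1 = (1 - t) * a.1 + t * b.1 := by
        simp [Prod.fst_add, Prod.smul_fst, smul_eq_mul]
      rw [hc]; linear_combination htu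
    · have hc : ((1 - t) • a + t • b).2 = (1 - t) * a.2 + t * b.2 := by
        simp [Prod.snd_add, Prod.smul_snd, smul_eq_mul]
      rw [hc]
      have hb' := hbr p hp
      have hβ : (b.2 - a.2) * (t * (b.1 - a.1)) = (b.2 - a.2) * (p.1 - a.1) := by
        rw [htu]
      nlinarith [hb', hβ, hdpos]
  intro p
  constructor
  · rintro ⟨hpU, hpN⟩
    rcases hpU with hpA | hpB
    · left
      refine ⟨⟨hpA, fun hmem => hpN (Set.add_subset_add_right
        (convexHull_mono (Set.diff_subset_diff_left Set.subset_union_left)) hmem)⟩, ?_⟩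
      by_contra hgt1
      push_neg at hgt1
      exact hpN (hmid p (Or.inl hpA) hgt1 (hsep p hpA b hbB))
    · right
      refine ⟨⟨hpB, fun hmem => hpN (Set.add_subset_add_right
        (convexHull_mono (Set.diff_subset_diff_left Set.subset_union_right)) hmem)⟩, ?_⟩
      by_contra hgt1
      push_neg at hgt1
      exact hpN (hmid p (Or.inr hpB) (hsep a haA p hpB) hgt1)
  · rintro (⟨⟨hpA, hpN⟩, hpa1⟩ | ⟨⟨hpB, hpN⟩, hpb1⟩)
    · refine ⟨Or.inl hpA, fun hmem => ?_⟩
      rw [mem_hull_add_downCone] at hmem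
      obtain ⟨q, hq, hq1, hq2⟩ := hmem
      by_cases hpa : p = a
      · have hq1' : q.1 = a.1 := by rw [hq1, hpa]
        have hq2' : a.2 ≤ q.2 := by rw [← hpa]; exact hq2
        have hfq : (b.2 - a.2) * q.1 - (b.1 - a.1) * q.2
            ≤ (b.2 - a.2) * a.1 - (b.1 - a.1) * a.2 := by
          rw [hq1']
          have := mul_le_mul_of_nonneg_left hq2' hdpos.le
          linarith
        have hqb : q = b := by
          refine eq_of_min ((hA.union hB).diff (t := {p})) (fun x hxm => hbel x hxm.1)
            (fun x hxm hxb => hstrict x hxm.1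
              (fun hh => hxm.2 (by rw [hh]; exact Set.mem_singleton_iff.2 hpa.symm)) hxb)
            hq hfq
        rw [hqb] at hq1'
        linarith
      · have hpa1' : p.1 < a.1 :=
          lt_of_le_of_ne hpa1 (fun hh => hpa (hx p (Or.inl hpA) a (Or.inl haA) hh))
        obtain ⟨r, hr, hr1, hr2⟩ := chopLeft hd (fun x hxm => hbel x hxm.1) hq
          (by rw [hq1]; exact hpa1)
        apply hpN
        rw [mem_hull_add_downCone]
        refine ⟨r, convexHull_mono ?_ hr, by rw [hr1, hq1], le_trans hq2 hr2⟩
        rintro x (⟨⟨hxU, hxp⟩, hx1⟩ | hxa)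
        · rcases hxU with hxA | hxB
          · exact ⟨hxA, hxp⟩
          · exact absurd hx1 (not_le.2 (hsep a haA x hxB))
        · rw [Set.mem_singleton_iff.1 hxa]
          exact ⟨haA, fun hh => hpa (Set.mem_singleton_iff.1 hh).symm⟩
    · refine ⟨Or.inr hpB, fun hmem => ?_⟩
      rw [mem_hull_add_downCone] at hmem
      obtain ⟨q, hq, hq1, hq2⟩ := hmem
      by_cases hpb : p = b
      · have hq1' : q.1 = b.1 := by rw [hq1, hpb]
        have hq2' : b.2 ≤ q.2 := by rw [← hpb]; exact hq2
        have hfq : (b.2 - a.2) * q.1 - (b.1 - a.1) * q.2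
            ≤ (b.2 - a.2) * a.1 - (b.1 - a.1) * a.2 := by
          rw [hq1']
          have := mul_le_mul_of_nonneg_left hq2' hdpos.le
          nlinarith [this]
        have hqa : q = a := by
          refine eq_of_min ((hA.union hB).diff (t := {p})) (fun x hxm => hbel x hxm.1)
            (fun x hxm hxa => hstrict x hxm.1 hxa
              (fun hh => hxm.2 (by rw [hh]; exact Set.mem_singleton_iff.2 hpb.symm)))
            hq hfq
        rw [hqa] at hq1'
        linarith
      · have hpb1' : b.1 < p.1 :=
          lt_of_le_of_ne hpb1 (fun hh => hpb (hx b (Or.inr hbB) p (Or.inr hpB) hh).symm)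
        obtain ⟨r, hr, hr1, hr2⟩ := chopRight hd (fun x hxm => hbel x hxm.1) hq
          (by rw [hq1]; exact hpb1)
        apply hpN
        rw [mem_hull_add_downCone]
        refine ⟨r, convexHull_mono ?_ hr, by rw [hr1, hq1], le_trans hq2 hr2⟩
        rintro x (⟨⟨hxU, hxp⟩, hx1⟩ | hxb)
        · rcases hxU with hxA | hxB
          · exact absurd hx1 (not_le.2 (hsep x hxA b hbB))
          · exact ⟨hxB, hxp⟩
        · rw [Set.mem_singleton_iff.1 hxb]
          exact ⟨hbB, fun hh => hpb (Set.mem_singleton_iff.1 hh).symm⟩
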